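/- Every ultrametric is a fixed point of the single-linkage operation: if (X,u) is a finite ultrametric space and x₁ ≠ x₂ ∈ X, then max over subsets A ⊆ X with x₁ ∈ A, x₂ ∉ A of min{u(y₁,y₂) : y₁ ∈ A, y₂ ∉ A} equals u(x₁,x₂). -/

import Mathlib

def IsWeight {X : Type*} (u : X → X → ℝ) : Prop :=
  (∀ x y, 0 ≤ u x y) ∧ (∀ x y, u x y = u y x) ∧ (∀ x, u x x = 0)

/-- The minimal `u`-distance across the bipartition `{A, Aᶜ}`. -/
noncomputable def crossDist {X : Type*} (u : X → X → ℝ) (A : Set X) : ℝ :=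
  sInf {s : ℝ | ∃ y₁ ∈ A, ∃ y₂ ∉ A, s = u y₁ y₂}

/-- The single-linkage weight: the maximal, over bipartitions separating
`x₁` from `x₂`, minimal cross-distance; `0` on the diagonal. -/
noncomputable def Ebi {X : Type*} [DecidableEq X] (u : X → X → ℝ) (x₁ x₂ : X) : ℝ :=
  if x₁ = x₂ then 0
  else sSup {r : ℝ | ∃ A : Set X, x₁ ∈ A ∧ x₂ ∉ A ∧ r = crossDist u A}

def IsUltrametric {X : Type*} (u : X → X → ℝ) : Prop :=
  IsWeight u ∧ ∀ x y z, u x z ≤ max (u x y) (u y z)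

theorem Ebi_fixes_ultrametrics {X : Type*} [Fintype X] [DecidableEq X]
    (u : X → X → ℝ) (hu : IsUltrametric u) (x₁ x₂ : X) (hne : x₁ ≠ x₂) :
    Ebi u x₁ x₂ = u x₁ x₂ := by
  obtain ⟨⟨hnn, hsymm, hdiag⟩, hult⟩ := hu
  set d := u x₁ x₂ with hd
  -- for any A separating x₁ from x₂, crossDist u A ≤ d
  have hcross_le : ∀ A : Set X, x₁ ∈ A → x₂ ∉ A → crossDist u A ≤ d := by
    intro A h1 h2
    exact csInf_le ⟨0, fun s ⟨y₁, _, y₂, _, hs⟩ => hs ▸ hnn y₁ y₂⟩ ⟨x₁, h1, x₂, h2, rfl⟩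
  -- there is a set A with x₁ ∈ A, x₂ ∉ A, crossDist u A = d
  have hexists : ∃ A : Set X, x₁ ∈ A ∧ x₂ ∉ A ∧ crossDist u A = d := by
    rcases lt_or_eq_of_le (hnn x₁ x₂) with hdpos | hd0
    · have hm1 : x₁ ∈ {y | u x₁ y < d} := by simpa [hdiag] using hdpos
      have hm2 : x₂ ∉ {y | u x₁ y < d} := by simp; exact le_of_eq hd
      refine ⟨{y | u x₁ y < d}, hm1, hm2, ?_⟩
      have hne' : {s : ℝ | ∃ y₁ ∈ {y | u x₁ y < d}, ∃ y₂ ∉ {y | u x₁ y < d}, s = u y₁ y₂}.Nonempty :=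
        ⟨d, x₁, hm1, x₂, hm2, rfl⟩
      apply le_antisymm (hcross_le _ hm1 hm2)
      apply le_csInf hne'
      rintro s ⟨y₁, hy₁, y₂, hy₂, rfl⟩
      simp only [Set.mem_setOf_eq, not_lt] at hy₁ hy₂
      have h := hult x₁ y₁ y₂
      rcases max_cases (u x₁ y₁) (u y₁ y₂) with ⟨he, _⟩ | ⟨he, _⟩ <;> rw [he] at h <;> linarith
    · have hm1 : x₁ ∈ ({x₁} : Set X) := Set.mem_singleton _
      have hm2 : x₂ ∉ ({x₁} : Set X) := fun h => hne (Set.mem_singleton_iff.mp h).symm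
      refine ⟨{x₁}, hm1, hm2, ?_⟩
      apply le_antisymm (hcross_le _ hm1 hm2)
      rw [hd, ← hd0]
      have hne' : {s : ℝ | ∃ y₁ ∈ ({x₁} : Set X), ∃ y₂ ∉ ({x₁} : Set X), s = u y₁ y₂}.Nonempty :=
        ⟨d, x₁, hm1, x₂, hm2, rfl⟩
      apply le_csInf hne'
      rintro s ⟨y₁, hy₁, y₂, hy₂, rfl⟩
      exact hnn y₁ y₂
  obtain ⟨A₀, hA1, hA2, hA3⟩ := hexists
  rw [Ebi, if_neg hne]
  apply le_antisymm
  · have hS : {r : ℝ | ∃ A : Set X, x₁ ∈ A ∧ x₂ ∉ A ∧ r = crossDist u A}.Nonempty :=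
      ⟨d, A₀, hA1, hA2, hA3.symm⟩
    apply csSup_le hS
    rintro r ⟨A, h1, h2, rfl⟩
    exact hcross_le A h1 h2
  · have hB : BddAbove {r : ℝ | ∃ A : Set X, x₁ ∈ A ∧ x₂ ∉ A ∧ r = crossDist u A} :=
      ⟨d, fun r ⟨A, h1, h2, hr⟩ => hr ▸ hcross_le A h1 h2⟩
    exact le_csSup hB ⟨A₀, hA1, hA2, hA3.symm⟩
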